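/- Suppose there is δ₀ > 0 such that for every δ ∈ [0,δ₀] the family L_{δ,f} and the corresponding self-consistent operator 𝓛_δ satisfy the standing assumptions (a)–(f) with fixed point h_δ ∈ B_ss and with constants in (b),(c),(e) independent of δ, that each ∂L_{δ,h_δ} is bounded from V_w to B_ss, and that sup_{δ∈[0,δ₀]} ‖h_δ‖_ss < ∞. Suppose moreover there exist n ∈ ℕ and ρ < 1 such that ‖L_{δ,h_δ}ⁿ‖_{V_s→V_s} ≤ ρ for every δ ∈ [0,δ₀]. Then there exists 0 < δ₁ ≤ δ₀ such that ‖d𝓛_{δ,h_δ}ⁿ‖_{V_s→V_s} < 1 for every 0 < δ ≤ δ₁. -/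
import Mathlib


open Filter MeasureTheory

/-- Sequential composition `L_{f₁} ∘ ⋯ ∘ L_{fₙ}` of a family of operators along a list
of measures `[f₁, …, fₙ]`. -/
def seqComp {V : Type*} [AddCommGroup V] [Module ℝ V]
    (L : V → Module.End ℝ V) : List V → V → V
  | [], g => g
  | f :: t, g => L f (seqComp L t g)

/-- Suppose that for every `δ ∈ [0,δ₀]` the family `L_{δ,f}` and the
self-consistent transfer operator `𝓛_δ(f) = L_{δ,f}(f)` satisfy the standing assumptions
(a)–(f) with fixed point `h_δ ∈ B_ss`, constants in (b), (c), (e) independent of `δ`,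
that each `∂L_{δ,h_δ}` is bounded from `V_w` to `B_ss`, and `sup_δ ‖h_δ‖_ss < ∞`.
If there are `n ∈ ℕ` and `ρ < 1` with `‖L_{δ,h_δ}ⁿ‖_{V_s→V_s} ≤ ρ` for all `δ ∈ [0,δ₀]`,
then there is `0 < δ₁ ≤ δ₀` such that `‖d𝓛_{δ,h_δ}ⁿ‖_{V_s→V_s} < 1` for all `0 < δ ≤ δ₁`. -/
theorem differential_contracts_weak_coupling
    {V : Type*} [AddCommGroup V] [Module ℝ V]
    -- the three norms (weak, strong, strongest); the ambient space is `B_w = V`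
    (nw ns nss : Seminorm ℝ V)
    -- the subspaces `B_s` and `B_ss`
    (Bs Bss : Submodule ℝ V)
    (hBssBs : Bss ≤ Bs)
    (hwle : ∀ x ∈ Bs, nw x ≤ ns x)
    (hsle : ∀ x ∈ Bss, ns x ≤ nss x)
    -- total-mass functional `μ ↦ μ(X)` and the set of probability measures in `B_w`
    (mass : V →ₗ[ℝ] ℝ)
    (P : Set V) (hP : ∀ μ ∈ P, mass μ = 1)
    -- the range of coupling strengths
    (δ₀ : ℝ) (hδ₀ : 0 < δ₀)
    -- the family of Markov bounded operators `(δ, f) ↦ L_{δ,f}`, preserving `B_s`, `B_ss`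
    (L : ℝ → V → Module.End ℝ V)
    (hMarkov : ∀ δ ∈ Set.Icc 0 δ₀, ∀ f x, mass (L δ f x) = mass x)
    (hpres_s : ∀ δ ∈ Set.Icc 0 δ₀, ∀ f, ∀ x ∈ Bs, L δ f x ∈ Bs)
    (hpres_ss : ∀ δ ∈ Set.Icc 0 δ₀, ∀ f, ∀ x ∈ Bss, L δ f x ∈ Bss)
    -- (a) fixed points `h_δ ∈ B_ss`
    (h : ℝ → V)
    (hh : ∀ δ ∈ Set.Icc 0 δ₀, h δ ∈ Bss)
    (hfix : ∀ δ ∈ Set.Icc 0 δ₀, L δ (h δ) (h δ) = h δ)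
    -- `sup_δ ‖h_δ‖_ss < ∞`
    (Kh : ℝ) (hKh : ∀ δ ∈ Set.Icc 0 δ₀, nss (h δ) ≤ Kh)
    -- (b) boundedness, with constant independent of `δ`
    (C : ℝ) (hC : 0 ≤ C)
    (hb_w : ∀ δ ∈ Set.Icc 0 δ₀, ∀ f x, nw (L δ f x) ≤ C * nw x)
    (hb_s : ∀ δ ∈ Set.Icc 0 δ₀, ∀ f, ∀ x ∈ Bs, ns (L δ f x) ≤ C * ns x)
    (hb_ss : ∀ δ ∈ Set.Icc 0 δ₀, ∀ f, ∀ x ∈ Bss, nss (L δ f x) ≤ C * nss x)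
    -- (c) sequential Lasota-Yorke inequalities, with constants independent of `δ`
    (A B lam : ℝ) (hA : 0 < A) (hB : 0 < B) (hlam : lam < 1)
    (hc_w : ∀ δ ∈ Set.Icc 0 δ₀, ∀ fs : List V, (∀ f ∈ fs, f ∈ P) → ∀ g ∈ Bs,
      nw (seqComp (L δ) fs g) ≤ B * nw g)
    (hc_s : ∀ δ ∈ Set.Icc 0 δ₀, ∀ fs : List V, (∀ f ∈ fs, f ∈ P) → ∀ g ∈ Bs,
      ns (seqComp (L δ) fs g) ≤ A * lam ^ fs.length * ns g + B * nw g)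
    -- (d) convergence to equilibrium for each `L_{δ,h_δ}`
    (hd : ∀ δ ∈ Set.Icc 0 δ₀, ∃ a : ℕ → ℝ, (∀ n, 0 ≤ a n) ∧ Tendsto a atTop (nhds 0) ∧
      ∀ n : ℕ, ∀ μ ∈ Bs, mass μ = 0 → nw ((L δ (h δ) ^ n) μ) ≤ a n * ns μ)
    -- (e) regularity of the family, with constants independent of `δ`
    (C₀ : ℝ) (hC₀ : 0 < C₀)
    (he₁ : ∀ δ ∈ Set.Icc 0 δ₀, ∀ f ∈ Bs, ∀ g ∈ Bs,
      ns (L δ f (h δ) - L δ g (h δ)) ≤ δ * C₀ * nss (h δ) * nw (f - g))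
    (C₁ : ℝ) (hC₁ : 0 < C₁)
    (he₂ : ∀ δ ∈ Set.Icc 0 δ₀, ∀ f₁ f₂ : V, ∀ g ∈ Bs,
      nw (L δ f₁ g - L δ f₂ g) ≤ δ * C₁ * ns g * nw (f₁ - f₂))
    -- (f) differentiability of the family at `h_δ`: bounded linear `∂L_{δ,h_δ} : V_w → V_s`
    (dL : ℝ → Module.End ℝ V)
    (hdL_maps : ∀ δ ∈ Set.Icc 0 δ₀, ∀ g : V, mass g = 0 → dL δ g ∈ Bs ∧ mass (dL δ g) = 0)
    (hdL_bdd : ∀ δ ∈ Set.Icc 0 δ₀, ∃ K : ℝ, ∀ g : V, mass g = 0 → ns (dL δ g) ≤ K * nw g)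
    (hf : ∀ δ ∈ Set.Icc 0 δ₀, ∀ ε > (0:ℝ), ∃ r > (0:ℝ), ∀ g : V, mass g = 0 → nw g ≤ r →
      ns (L δ (h δ + g) (h δ) - L δ (h δ) (h δ) - dL δ g) ≤ ε * nw g)
    -- each `∂L_{δ,h_δ}` is bounded as an operator from `V_w` to `B_ss`
    (hdL_ss : ∀ δ ∈ Set.Icc 0 δ₀, ∀ g : V, mass g = 0 → dL δ g ∈ Bss)
    (hdL_ss_bdd : ∀ δ ∈ Set.Icc 0 δ₀, ∃ K : ℝ, ∀ g : V, mass g = 0 → nss (dL δ g) ≤ K * nw g)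
    -- `‖L_{δ,h_δ}ⁿ‖_{V_s→V_s} ≤ ρ < 1` uniformly in `δ`
    (n : ℕ) (ρ : ℝ) (hρ : ρ < 1)
    (hLn : ∀ δ ∈ Set.Icc 0 δ₀, ∀ g ∈ Bs, mass g = 0 →
      ns ((L δ (h δ) ^ n) g) ≤ ρ * ns g) :
    -- conclusion: `‖d𝓛_{δ,h_δ}ⁿ‖_{V_s→V_s} < 1` for all `0 < δ ≤ δ₁`
    ∃ δ₁ : ℝ, 0 < δ₁ ∧ δ₁ ≤ δ₀ ∧ ∀ δ : ℝ, 0 < δ → δ ≤ δ₁ →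
      ∃ ρ' < (1:ℝ), ∀ g ∈ Bs, mass g = 0 →
        ns (((L δ (h δ) + dL δ) ^ n) g) ≤ ρ' * ns g := by

  classical
  set M0 : ℝ := C₀ * Kh with hM0
  have hKh0 : 0 ≤ Kh := le_trans (apply_nonneg nss (h 0)) (hKh 0 ⟨le_refl 0, hδ₀.le⟩)
  have hM0nn : 0 ≤ M0 := mul_nonneg hC₀.le hKh0
  -- Step 1: bound on the derivative operator on V_s
  have key : ∀ δ ∈ Set.Icc (0:ℝ) δ₀, ∀ g ∈ Bs, mass g = 0 →
      ns (dL δ g) ≤ δ * M0 * nw g := by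
    intro δ hδ g hg hmg
    have hδnn : 0 ≤ δ := hδ.1
    have hnwg : (0:ℝ) ≤ nw g := apply_nonneg nw g
    have hden : (0:ℝ) < nw g + 1 := by linarith
    refine le_of_forall_pos_le_add ?_
    intro ε hε
    have hε' : (0:ℝ) < ε / (nw g + 1) := div_pos hε hden
    obtain ⟨r, hr, hfr⟩ := hf δ hδ (ε / (nw g + 1)) hε'
    set t : ℝ := r / (nw g + 1) with ht
    have htpos : 0 < t := div_pos hr hden
    have hmass_tg : mass (t • g) = 0 := by
      rw [LinearMap.map_smul, hmg, smul_zero]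
    have hnw_tg : nw (t • g) = t * nw g := by
      rw [map_smul_eq_mul, Real.norm_eq_abs, abs_of_pos htpos]
    have htg_le : nw (t • g) ≤ r := by
      rw [hnw_tg, ht]
      rw [div_mul_eq_mul_div, div_le_iff₀ hden]
      nlinarith
    have h1 := hfr (t • g) hmass_tg htg_le
    have hhs : h δ ∈ Bs := hBssBs (hh δ hδ)
    have h2 := he₁ δ hδ (h δ + t • g) (Bs.add_mem hhs (Bs.smul_mem t hg)) (h δ) hhs
    rw [add_sub_cancel_left] at h2
    have h2' : ns (L δ (h δ + t • g) (h δ) - L δ (h δ) (h δ)) ≤ δ * M0 * nw (t • g) := by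
      refine h2.trans ?_
      calc δ * C₀ * nss (h δ) * nw (t • g) ≤ δ * C₀ * Kh * nw (t • g) :=
            mul_le_mul_of_nonneg_right
              (mul_le_mul_of_nonneg_left (hKh δ hδ) (mul_nonneg hδnn hC₀.le))
              (apply_nonneg nw _)
        _ = δ * M0 * nw (t • g) := by rw [hM0]; ring
    have h3 : ns (dL δ (t • g)) ≤ δ * M0 * nw (t • g) + (ε / (nw g + 1)) * nw (t • g) := by
      have heq : dL δ (t • g) = (L δ (h δ + t • g) (h δ) - L δ (h δ) (h δ)) -
          (L δ (h δ + t • g) (h δ) - L δ (h δ) (h δ) - dL δ (t • g)) := by abel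
      calc ns (dL δ (t • g)) = ns ((L δ (h δ + t • g) (h δ) - L δ (h δ) (h δ)) -
              (L δ (h δ + t • g) (h δ) - L δ (h δ) (h δ) - dL δ (t • g))) := by rw [← heq]
        _ ≤ ns (L δ (h δ + t • g) (h δ) - L δ (h δ) (h δ)) +
              ns (L δ (h δ + t • g) (h δ) - L δ (h δ) (h δ) - dL δ (t • g)) :=
            map_sub_le_add ns _ _
        _ ≤ _ := add_le_add h2' h1
    have h4 : ns (dL δ (t • g)) = t * ns (dL δ g) := by
      rw [LinearMap.map_smul, map_smul_eq_mul, Real.norm_eq_abs, abs_of_pos htpos]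
    rw [h4, hnw_tg] at h3
    have h5 : ns (dL δ g) ≤ δ * M0 * nw g + (ε / (nw g + 1)) * nw g := by
      have hrw : δ * M0 * (t * nw g) + ε / (nw g + 1) * (t * nw g) =
          t * (δ * M0 * nw g + ε / (nw g + 1) * nw g) := by ring
      rw [hrw] at h3
      exact le_of_mul_le_mul_left h3 htpos
    refine h5.trans ?_
    have : (ε / (nw g + 1)) * nw g ≤ ε := by
      rw [div_mul_eq_mul_div, div_le_iff₀ hden]
      nlinarith
    linarith
  have keys : ∀ δ ∈ Set.Icc (0:ℝ) δ₀, ∀ g ∈ Bs, mass g = 0 →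
      ns (dL δ g) ≤ δ * M0 * ns g := by
    intro δ hδ g hg hmg
    refine (key δ hδ g hg hmg).trans ?_
    have := hwle g hg
    have : 0 ≤ δ * M0 := mul_nonneg hδ.1 hM0nn
    nlinarith [hwle g hg]
  -- Step 2: binomial-type estimate for (T + D)^k
  have step : ∀ δ ∈ Set.Icc (0:ℝ) δ₀, ∀ k : ℕ, ∀ g ∈ Bs, mass g = 0 →
      ((L δ (h δ) ^ k) g ∈ Bs ∧ mass ((L δ (h δ) ^ k) g) = 0) ∧
      (((L δ (h δ) + dL δ) ^ k) g ∈ Bs ∧ mass (((L δ (h δ) + dL δ) ^ k) g) = 0) ∧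
      ns (((L δ (h δ) + dL δ) ^ k) g) ≤ (C + δ * M0) ^ k * ns g ∧
      ns (((L δ (h δ) + dL δ) ^ k) g - (L δ (h δ) ^ k) g) ≤
        ((C + δ * M0) ^ k - C ^ k) * ns g := by
    intro δ hδ k
    have hδnn : 0 ≤ δ := hδ.1
    have hdMnn : 0 ≤ δ * M0 := mul_nonneg hδnn hM0nn
    induction k with
    | zero =>
      intro g hg hmg
      simp only [pow_zero, Module.End.one_apply]
      refine ⟨⟨hg, hmg⟩, ⟨hg, hmg⟩, by simp, by simp⟩
    | succ k ih =>
      intro g hg hmg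
      obtain ⟨⟨hT, hTm⟩, ⟨hS, hSm⟩, hSb, hdiff⟩ := ih g hg hmg
      set T := L δ (h δ) with hTdef
      set S := T + dL δ with hSdef
      have happS : ∀ x : V, S x = T x + dL δ x := fun x => rfl
      have hpowT : (T ^ (k+1)) g = T ((T ^ k) g) := by
        rw [pow_succ', Module.End.mul_apply]
      have hpowS : (S ^ (k+1)) g = S ((S ^ k) g) := by
        rw [pow_succ', Module.End.mul_apply]
      have hnsg : (0:ℝ) ≤ ns g := apply_nonneg ns g
      -- memberships
      have hT1 : T ((T ^ k) g) ∈ Bs := hpres_s δ hδ _ _ hT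
      have hT1m : mass (T ((T ^ k) g)) = 0 := by rw [hMarkov δ hδ, hTm]
      have hdL1 := hdL_maps δ hδ ((S ^ k) g) hSm
      have hS1 : S ((S ^ k) g) ∈ Bs := by
        rw [happS]; exact Bs.add_mem (hpres_s δ hδ _ _ hS) hdL1.1
      have hS1m : mass (S ((S ^ k) g)) = 0 := by
        rw [happS, map_add, hMarkov δ hδ, hSm, hdL1.2, add_zero]
      refine ⟨⟨by rw [hpowT]; exact hT1, by rw [hpowT]; exact hT1m⟩,
             ⟨by rw [hpowS]; exact hS1, by rw [hpowS]; exact hS1m⟩, ?_, ?_⟩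
      · -- norm bound for S^(k+1)
        rw [hpowS, happS]
        have hb1 : ns (T ((S ^ k) g)) ≤ C * ns ((S ^ k) g) := hb_s δ hδ _ _ hS
        have hb2 : ns (dL δ ((S ^ k) g)) ≤ δ * M0 * ns ((S ^ k) g) :=
          keys δ hδ _ hS hSm
        calc ns (T ((S ^ k) g) + dL δ ((S ^ k) g))
            ≤ ns (T ((S ^ k) g)) + ns (dL δ ((S ^ k) g)) := map_add_le_add ns _ _
          _ ≤ C * ns ((S ^ k) g) + δ * M0 * ns ((S ^ k) g) := add_le_add hb1 hb2
          _ = (C + δ * M0) * ns ((S ^ k) g) := by ring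
          _ ≤ (C + δ * M0) * ((C + δ * M0) ^ k * ns g) := by
              have : 0 ≤ C + δ * M0 := by linarith
              nlinarith
          _ = (C + δ * M0) ^ (k+1) * ns g := by ring
      · -- difference bound
        have hdm : (S ^ k) g - (T ^ k) g ∈ Bs := Bs.sub_mem hS hT
        have heq : (S ^ (k+1)) g - (T ^ (k+1)) g =
            T ((S ^ k) g - (T ^ k) g) + dL δ ((S ^ k) g) := by
          rw [hpowS, hpowT, happS, map_sub]
          abel
        have hb1 : ns (T ((S ^ k) g - (T ^ k) g)) ≤ C * ns ((S ^ k) g - (T ^ k) g) :=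
          hb_s δ hδ _ _ hdm
        have hb2 : ns (dL δ ((S ^ k) g)) ≤ δ * M0 * ns ((S ^ k) g) :=
          keys δ hδ _ hS hSm
        have hpowk : (0:ℝ) ≤ (C + δ * M0) ^ k := pow_nonneg (by linarith) k
        calc ns ((S ^ (k+1)) g - (T ^ (k+1)) g)
            ≤ ns (T ((S ^ k) g - (T ^ k) g)) + ns (dL δ ((S ^ k) g)) := by
              rw [heq]; exact map_add_le_add ns _ _
          _ ≤ C * ns ((S ^ k) g - (T ^ k) g) + δ * M0 * ns ((S ^ k) g) :=
              add_le_add hb1 hb2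
          _ ≤ C * (((C + δ * M0) ^ k - C ^ k) * ns g) +
                δ * M0 * ((C + δ * M0) ^ k * ns g) := by nlinarith
          _ = ((C + δ * M0) ^ (k+1) - C ^ (k+1)) * ns g := by ring
  -- Step 3: choose δ₁ by continuity
  have hcont : ContinuousAt (fun δ : ℝ => (C + δ * M0) ^ n) 0 := by fun_prop
  have hlim : Tendsto (fun δ : ℝ => (C + δ * M0) ^ n) (nhds 0) (nhds (C ^ n)) := by
    have := hcont.tendsto
    simpa using this
  have hev : ∀ᶠ δ : ℝ in nhds 0, (C + δ * M0) ^ n < C ^ n + (1 - ρ) :=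
    hlim.eventually_lt_const (by linarith)
  rw [Metric.eventually_nhds_iff] at hev
  obtain ⟨ε, hε, hevε⟩ := hev
  refine ⟨min δ₀ (ε / 2), lt_min hδ₀ (by linarith), min_le_left _ _, ?_⟩
  intro δ hδpos hδle
  have hδIcc : δ ∈ Set.Icc (0:ℝ) δ₀ :=
    ⟨hδpos.le, hδle.trans (min_le_left _ _)⟩
  have hδε : dist δ (0:ℝ) < ε := by
    rw [Real.dist_eq, sub_zero, abs_of_pos hδpos]
    have := hδle.trans (min_le_right _ _)
    linarith
  have hφ := hevε hδε
  refine ⟨ρ + ((C + δ * M0) ^ n - C ^ n), by linarith, ?_⟩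
  intro g hg hmg
  obtain ⟨_, _, _, hdiff⟩ := step δ hδIcc n g hg hmg
  have hLng := hLn δ hδIcc g hg hmg
  calc ns (((L δ (h δ) + dL δ) ^ n) g)
      = ns ((L δ (h δ) ^ n) g + (((L δ (h δ) + dL δ) ^ n) g - (L δ (h δ) ^ n) g)) := by
        congr 1; abel
    _ ≤ ns ((L δ (h δ) ^ n) g) +
          ns (((L δ (h δ) + dL δ) ^ n) g - (L δ (h δ) ^ n) g) := map_add_le_add ns _ _
    _ ≤ ρ * ns g + ((C + δ * M0) ^ n - C ^ n) * ns g := add_le_add hLng hdiff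
    _ = (ρ + ((C + δ * M0) ^ n - C ^ n)) * ns g := by ring
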